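/- arXiv:1311.7479 — 2 statements merged into one kernel-verified Lean document; each statement's English description precedes it below -/
import Mathlib

section
/- Fix N ≥ 2, 1 < p < 1 + 4/(N−1), a > 1, and set α = 2/(p−1) − (N−1)/2 > 0 and ρ(y) = (1−|y|²)^α on the open unit ball B ⊂ ℝ^N. There exists a constant C = C(N,p,a) > 0 such that for every s ≥ 1 and every measurable function w : B → ℝ with ∫_B |w|^{p+1} ρ dy < ∞, one has ∫_B |w|^{p+1}/(log(2 + e^{4s/(p−1)} w²))^a ρ dy ≤ C e^{−(p+1)s/(p−1)} + (C/s^a) ∫_B |w|^{p+1} ρ dy. -/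
open MeasureTheory Real Filter Set
open scoped RealInnerProductSpace

noncomputable section

/-- The open unit ball of `ℝ^N`. -/
def UnitBall (N : ℕ) : Set (EuclideanSpace ℝ (Fin N)) := Metric.ball 0 1

/-- The weight `ρ(y) = (1 - |y|²)^α`. -/
def rho (N : ℕ) (α : ℝ) (y : EuclideanSpace ℝ (Fin N)) : ℝ := (1 - ‖y‖ ^ 2) ^ α

/-- The perturbation `f(u) = |u|^p / (log (2 + u²))^a`. -/
def fpert (p a u : ℝ) : ℝ := |u| ^ p / (Real.log (2 + u ^ 2)) ^ a

/-- The antiderivative `F(u) = ∫₀ᵘ f(v) dv`. -/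
def Fpert (p a u : ℝ) : ℝ := ∫ v in (0:ℝ)..u, fpert p a v

/-- Divergence of a vector field on `ℝ^N`. -/
def vdiv {N : ℕ} (V : EuclideanSpace ℝ (Fin N) → EuclideanSpace ℝ (Fin N))
    (y : EuclideanSpace ℝ (Fin N)) : ℝ :=
  ∑ i, fderiv ℝ (fun x => ⟪V x, EuclideanSpace.single i 1⟫) y (EuclideanSpace.single i 1)

/-- The time derivative `∂ₛ w`. -/
def dw {N : ℕ} (w : ℝ → EuclideanSpace ℝ (Fin N) → ℝ) (s : ℝ)
    (y : EuclideanSpace ℝ (Fin N)) : ℝ :=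
  deriv (fun t => w t y) s

/-- `w` satisfies the similarity-variables equation at all times `s ∈ S`. -/
def SimEq (N : ℕ) (p a α : ℝ) (w : ℝ → EuclideanSpace ℝ (Fin N) → ℝ) (S : Set ℝ) : Prop :=
  ∀ s ∈ S, ∀ y ∈ UnitBall N,
    deriv (fun t => dw w t y) s =
      (1 / rho N α y) *
        vdiv (fun x => rho N α x • gradient (w s) x
            - (rho N α x * ⟪x, gradient (w s) x⟫) • x) y
      - (2 * (p + 1) / (p - 1) ^ 2) * w s y
      + |w s y| ^ (p - 1) * w s y
      - ((p + 3) / (p - 1)) * dw w s y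
      - 2 * ⟪y, gradient (dw w s) y⟫
      + Real.exp (-2 * p * s / (p - 1)) * fpert p a (Real.exp (2 * s / (p - 1)) * w s y)

/-- Membership in the weighted energy space `H`. -/
def MemH (N : ℕ) (α : ℝ) (w₁ w₂ : EuclideanSpace ℝ (Fin N) → ℝ) : Prop :=
  IntegrableOn
    (fun y => ((w₂ y) ^ 2 + ‖gradient w₁ y‖ ^ 2 * (1 - ‖y‖ ^ 2) + (w₁ y) ^ 2) * rho N α y)
    (UnitBall N)

/-- A solution of the similarity-variables equation on `B × [s₀, ∞)`,
with `(w, ∂ₛ w) ∈ C([s₀,∞), H)` and the integrability needed for the energy estimates. -/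
def SimSolution (N : ℕ) (p a α : ℝ) (w : ℝ → EuclideanSpace ℝ (Fin N) → ℝ) (s₀ : ℝ) : Prop :=
  SimEq N p a α w (Ici s₀) ∧
  ContDiffOn ℝ 2 (fun q : ℝ × EuclideanSpace ℝ (Fin N) => w q.1 q.2) (Ici s₀ ×ˢ UnitBall N) ∧
  (∀ s ∈ Ici s₀, MemH N α (w s) (dw w s)) ∧
  (∀ s ∈ Ici s₀, IntegrableOn (fun y => |w s y| ^ (p + 1) * rho N α y) (UnitBall N)) ∧
  (∀ s ∈ Ici s₀, IntegrableOn (fun y => (dw w s y) ^ 2 * rho N α y / (1 - ‖y‖ ^ 2)) (UnitBall N)) ∧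
  ContinuousOn (fun s => ∫ y in UnitBall N,
      ((dw w s y) ^ 2 + ‖gradient (w s) y‖ ^ 2 * (1 - ‖y‖ ^ 2) + (w s y) ^ 2) * rho N α y)
    (Ici s₀)

/-- The unperturbed energy `E₀`. -/
def Ezero (N : ℕ) (p α : ℝ) (w : ℝ → EuclideanSpace ℝ (Fin N) → ℝ) (s : ℝ) : ℝ :=
  ∫ y in UnitBall N,
    ((1 / 2) * (dw w s y) ^ 2 + (1 / 2) * ‖gradient (w s) y‖ ^ 2
      - (1 / 2) * ⟪y, gradient (w s) y⟫ ^ 2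
      + ((p + 1) / (p - 1) ^ 2) * (w s y) ^ 2
      - (1 / (p + 1)) * |w s y| ^ (p + 1)) * rho N α y

/-- The term `I(w(s), s)`. -/
def Ipart (N : ℕ) (p a α : ℝ) (w : ℝ → EuclideanSpace ℝ (Fin N) → ℝ) (s : ℝ) : ℝ :=
  - Real.exp (-2 * (p + 1) * s / (p - 1)) *
      ∫ y in UnitBall N, Fpert p a (Real.exp (2 * s / (p - 1)) * w s y) * rho N α y

/-- The term `J(w(s), s)`. -/
def Jpart (N : ℕ) (α b : ℝ) (w : ℝ → EuclideanSpace ℝ (Fin N) → ℝ) (s : ℝ) : ℝ :=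
  - (1 / s ^ b) * ∫ y in UnitBall N, w s y * dw w s y * rho N α y

/-- The modified energy `E(w(s), s) = E₀ + I + J`. -/
def Efun (N : ℕ) (p a α b : ℝ) (w : ℝ → EuclideanSpace ℝ (Fin N) → ℝ) (s : ℝ) : ℝ :=
  Ezero N p α w s + Ipart N p a α w s + Jpart N α b w s

/-- The Lyapunov functional `H(w(s), s)`. -/
def Hfun (N : ℕ) (p a α b θ : ℝ) (w : ℝ → EuclideanSpace ℝ (Fin N) → ℝ) (s : ℝ) : ℝ :=
  Real.exp ((p + 3) / ((a - 1) * s ^ (b - 1))) * Efun N p a α b w s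
    + θ * Real.exp (-(p + 1) * s / (p - 1))

/-- The dissipation term `∫_B (∂ₛ w)² ρ/(1-|y|²) dy`. -/
def Diss (N : ℕ) (α : ℝ) (w : ℝ → EuclideanSpace ℝ (Fin N) → ℝ) (s : ℝ) : ℝ :=
  ∫ y in UnitBall N, (dw w s y) ^ 2 * rho N α y / (1 - ‖y‖ ^ 2)

/-- The Laplacian on `ℝ^N`. -/
def lapl {N : ℕ} (u : EuclideanSpace ℝ (Fin N) → ℝ) (x : EuclideanSpace ℝ (Fin N)) : ℝ :=
  ∑ i, fderiv ℝ (fun x' => fderiv ℝ u x' (EuclideanSpace.single i 1)) x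
    (EuclideanSpace.single i 1)

/-- `u` is a solution of `∂ₜ²u = Δu + |u|^{p-1}u + f(u)` on its maximal influence domain
`D_u = {(x,t) : 0 ≤ t < T(x)}`, where the blow-up graph `T` is positive and 1-Lipschitz. -/
def WaveSolution (N : ℕ) (p a : ℝ) (u : EuclideanSpace ℝ (Fin N) → ℝ → ℝ)
    (T : EuclideanSpace ℝ (Fin N) → ℝ) : Prop :=
  LipschitzWith 1 T ∧ (∀ x, 0 < T x) ∧
  ∀ x t, 0 ≤ t → t < T x →
    deriv (fun τ => deriv (u x) τ) t =
      lapl (fun x' => u x' t) x + |u x t| ^ (p - 1) * u x t + fpert p a (u x t)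

/-- `x₀` is a non-characteristic point with cone slope `δ₀`: the cone
`C_{x₀,T(x₀),δ₀}` is contained in the domain of definition of `u`. -/
def NonChar (N : ℕ) (T : EuclideanSpace ℝ (Fin N) → ℝ)
    (x₀ : EuclideanSpace ℝ (Fin N)) (δ₀ : ℝ) : Prop :=
  0 < δ₀ ∧ δ₀ < 1 ∧
  ∀ ξ τ, (ξ, τ) ≠ (x₀, T x₀) → 0 ≤ τ → τ ≤ T x₀ - δ₀ * ‖ξ - x₀‖ → τ < T ξ

/-- The similarity-variables rescaling `w_{x₀,T₀}` of `u`. -/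
def simw (N : ℕ) (p : ℝ) (u : EuclideanSpace ℝ (Fin N) → ℝ → ℝ)
    (x₀ : EuclideanSpace ℝ (Fin N)) (T₀ : ℝ) (s : ℝ) (y : EuclideanSpace ℝ (Fin N)) : ℝ :=
  Real.exp (-2 * s / (p - 1)) * u (x₀ + Real.exp (-s) • y) (T₀ - Real.exp (-s))
set_option maxHeartbeats 2000000 in
/-- the logarithmic integral bound over the unit ball. -/
theorem log_integral_bound (N : ℕ) (hN : 2 ≤ N) (p a α : ℝ) (hp : 1 < p)
    (hpc : p < 1 + 4 / ((N : ℝ) - 1)) (ha : 1 < a)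
    (hα : α = 2 / (p - 1) - ((N : ℝ) - 1) / 2) :
    ∃ C > 0, ∀ s : ℝ, 1 ≤ s → ∀ w : EuclideanSpace ℝ (Fin N) → ℝ, Measurable w →
      IntegrableOn (fun y => |w y| ^ (p + 1) * rho N α y) (UnitBall N) →
      (∫ y in UnitBall N,
          |w y| ^ (p + 1) / (Real.log (2 + Real.exp (4 * s / (p - 1)) * (w y) ^ 2)) ^ a
            * rho N α y) ≤
        C * Real.exp (-(p + 1) * s / (p - 1)) +
          (C / s ^ a) * ∫ y in UnitBall N, |w y| ^ (p + 1) * rho N α y := by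
  have hp1 : (0:ℝ) < p - 1 := by linarith
  have ha0 : (0:ℝ) ≤ a := by linarith
  have hα0 : 0 ≤ α := by
    have hN1 : (0:ℝ) < (N:ℝ) - 1 := by
      have : (2:ℝ) ≤ (N:ℝ) := by exact_mod_cast hN
      linarith
    have h4 : (p - 1) * ((N:ℝ) - 1) < 4 := by
      rw [← lt_div_iff₀ hN1]; linarith
    rw [hα, sub_nonneg, div_le_div_iff₀ (by norm_num) hp1]
    nlinarith
  have hlog2 : (0:ℝ) < Real.log 2 := Real.log_pos (by norm_num)
  have hmeasB : MeasurableSet (UnitBall N) := measurableSet_ball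
  have hρ0 : ∀ y ∈ UnitBall N, 0 ≤ rho N α y := by
    intro y hy
    have hy' : ‖y‖ < 1 := by simpa [UnitBall, mem_ball_zero_iff] using hy
    exact Real.rpow_nonneg (by nlinarith [norm_nonneg y]) α
  have hρint : IntegrableOn (rho N α) (UnitBall N) := by
    have hmeas : Measurable (rho N α) := by
      have hc : Continuous fun y : EuclideanSpace ℝ (Fin N) => 1 - ‖y‖ ^ 2 := by continuity
      exact hc.measurable.pow measurable_const
    refine Integrable.mono' ((integrableOn_const_iff (C := (1:ℝ))).mpr (Or.inr measure_ball_lt_top))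
      hmeas.aestronglyMeasurable ?_
    filter_upwards [ae_restrict_mem hmeasB] with y hy
    have hy' : ‖y‖ < 1 := by simpa [UnitBall, mem_ball_zero_iff] using hy
    have h0 : 0 ≤ 1 - ‖y‖ ^ 2 := by nlinarith [norm_nonneg y]
    have h1 : 1 - ‖y‖ ^ 2 ≤ 1 := by nlinarith [norm_nonneg y]
    rw [Real.norm_eq_abs, rho, abs_of_nonneg (Real.rpow_nonneg h0 α)]
    exact Real.rpow_le_one h0 h1 hα0
  set K : ℝ := ∫ y in UnitBall N, rho N α y with hK
  have hK0 : 0 ≤ K := setIntegral_nonneg hmeasB hρ0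
  set C₀ : ℝ := ((Real.log 2)⁻¹) ^ a + ((p - 1) / 2) ^ a with hC₀
  have hA : (0:ℝ) < ((Real.log 2)⁻¹) ^ a := Real.rpow_pos_of_pos (by positivity) a
  have hB : (0:ℝ) < ((p - 1) / 2) ^ a := Real.rpow_pos_of_pos (by positivity) a
  have hC₀pos : 0 < C₀ := add_pos hA hB
  refine ⟨C₀ * (K + 1), by positivity, ?_⟩
  intro s hs w hw hwint
  have hs0 : (0:ℝ) < s := by linarith
  have hsa : (0:ℝ) < s ^ a := Real.rpow_pos_of_pos hs0 a
  set I : ℝ := ∫ y in UnitBall N, |w y| ^ (p + 1) * rho N α y with hI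
  have hI0 : 0 ≤ I := setIntegral_nonneg hmeasB fun y hy =>
    mul_nonneg (Real.rpow_nonneg (abs_nonneg _) _) (hρ0 y hy)
  set e : ℝ := Real.exp (-(p + 1) * s / (p - 1)) with he
  have he0 : 0 < e := he ▸ Real.exp_pos _
  have hgint : IntegrableOn (fun y =>
      C₀ * e * rho N α y + C₀ / s ^ a * (|w y| ^ (p + 1) * rho N α y)) (UnitBall N) :=
    (hρint.const_mul _).add (hwint.const_mul _)
  have hbound : ∀ y ∈ UnitBall N,
      |w y| ^ (p + 1) / (Real.log (2 + Real.exp (4 * s / (p - 1)) * (w y) ^ 2)) ^ a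
        * rho N α y ≤
      C₀ * e * rho N α y + C₀ / s ^ a * (|w y| ^ (p + 1) * rho N α y) := by
    intro y hy
    have hρy := hρ0 y hy
    set L : ℝ := Real.log (2 + Real.exp (4 * s / (p - 1)) * (w y) ^ 2) with hL
    have hbase : (2:ℝ) ≤ 2 + Real.exp (4 * s / (p - 1)) * (w y) ^ 2 := by
      nlinarith [Real.exp_pos (4 * s / (p - 1)), sq_nonneg (w y)]
    have hLlog2 : Real.log 2 ≤ L := Real.log_le_log (by norm_num) hbase
    have hLpos : 0 < L := lt_of_lt_of_le hlog2 hLlog2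
    have hsecond : 0 ≤ C₀ / s ^ a * (|w y| ^ (p + 1) * rho N α y) :=
      mul_nonneg (by positivity) (mul_nonneg (Real.rpow_nonneg (abs_nonneg _) _) hρy)
    have hfirst : 0 ≤ C₀ * e * rho N α y := mul_nonneg (by positivity) hρy
    by_cases hcase : |w y| ≤ Real.exp (-(s / (p - 1)))
    · -- small |w|
      have hnum : |w y| ^ (p + 1) ≤ e := by
        have h1 : |w y| ^ (p + 1) ≤ Real.exp (-(s / (p - 1))) ^ (p + 1) :=
          Real.rpow_le_rpow (abs_nonneg _) hcase (by linarith)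
        have h2 : Real.exp (-(s / (p - 1))) ^ (p + 1) = e := by
          rw [he, Real.rpow_def_of_pos (Real.exp_pos _), Real.log_exp]
          congr 1; field_simp
        linarith [h2 ▸ h1]
      have hden : Real.log 2 ^ a ≤ L ^ a := Real.rpow_le_rpow hlog2.le hLlog2 ha0
      have h3 : |w y| ^ (p + 1) / L ^ a ≤ e / Real.log 2 ^ a :=
        div_le_div₀ he0.le hnum (Real.rpow_pos_of_pos hlog2 a) hden
      have h4 : e / Real.log 2 ^ a = ((Real.log 2)⁻¹) ^ a * e := by
        rw [Real.inv_rpow hlog2.le]; field_simp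
      have h5 : |w y| ^ (p + 1) / L ^ a * rho N α y ≤ C₀ * e * rho N α y := by
        apply mul_le_mul_of_nonneg_right _ hρy
        calc |w y| ^ (p + 1) / L ^ a ≤ ((Real.log 2)⁻¹) ^ a * e := h4 ▸ h3
          _ ≤ C₀ * e := mul_le_mul_of_nonneg_right (by rw [hC₀]; linarith) he0.le
      exact h5.trans (le_add_of_nonneg_right hsecond)
    · -- large |w|
      push_neg at hcase
      have hw2 : Real.exp (-(2 * s / (p - 1))) ≤ (w y) ^ 2 := by
        have h1 : Real.exp (-(s / (p - 1))) ^ 2 ≤ |w y| ^ 2 :=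
          pow_le_pow_left₀ (Real.exp_pos _).le hcase.le 2
        have h2 : Real.exp (-(s / (p - 1))) ^ 2 = Real.exp (-(2 * s / (p - 1))) := by
          rw [sq, ← Real.exp_add]; congr 1; ring
        rw [h2, sq_abs] at h1
        exact h1
      have hLge : 2 * s / (p - 1) ≤ L := by
        have h2 : Real.exp (4 * s / (p - 1)) * Real.exp (-(2 * s / (p - 1))) ≤
            Real.exp (4 * s / (p - 1)) * (w y) ^ 2 :=
          mul_le_mul_of_nonneg_left hw2 (Real.exp_pos _).le
        rw [← Real.exp_add] at h2
        have h3 : 4 * s / (p - 1) + -(2 * s / (p - 1)) = 2 * s / (p - 1) := by ring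
        rw [h3] at h2
        calc 2 * s / (p - 1) = Real.log (Real.exp (2 * s / (p - 1))) := (Real.log_exp _).symm
          _ ≤ L := Real.log_le_log (Real.exp_pos _) (by linarith)
      have ht : (0:ℝ) < 2 * s / (p - 1) := by positivity
      have hLa : (2 * s / (p - 1)) ^ a ≤ L ^ a := Real.rpow_le_rpow ht.le hLge ha0
      have hsplit : (2 * s / (p - 1)) ^ a = (2 / (p - 1)) ^ a * s ^ a := by
        rw [← Real.mul_rpow (by positivity) hs0.le]
        congr 1; ring
      have hdpos : (0:ℝ) < (2 / (p - 1)) ^ a * s ^ a :=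
        mul_pos (Real.rpow_pos_of_pos (by positivity) a) hsa
      have h3 : |w y| ^ (p + 1) / L ^ a ≤ |w y| ^ (p + 1) / ((2 / (p - 1)) ^ a * s ^ a) :=
        div_le_div_of_nonneg_left (Real.rpow_nonneg (abs_nonneg _) _) hdpos (hsplit ▸ hLa)
      have hinv : ((2 / (p - 1) : ℝ) ^ a)⁻¹ = ((p - 1) / 2) ^ a := by
        rw [← Real.inv_rpow (by positivity), inv_div]
      have h4 : |w y| ^ (p + 1) / ((2 / (p - 1)) ^ a * s ^ a)
          = ((p - 1) / 2) ^ a / s ^ a * |w y| ^ (p + 1) := by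
        rw [div_eq_mul_inv, mul_inv, hinv]; ring
      have h5 : |w y| ^ (p + 1) / L ^ a * rho N α y
          ≤ C₀ / s ^ a * (|w y| ^ (p + 1) * rho N α y) := by
        have h6 : |w y| ^ (p + 1) / L ^ a ≤ C₀ / s ^ a * |w y| ^ (p + 1) := by
          calc |w y| ^ (p + 1) / L ^ a
              ≤ ((p - 1) / 2) ^ a / s ^ a * |w y| ^ (p + 1) := h4 ▸ h3
            _ ≤ C₀ / s ^ a * |w y| ^ (p + 1) := by
                apply mul_le_mul_of_nonneg_right _ (Real.rpow_nonneg (abs_nonneg _) _)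
                apply div_le_div_of_nonneg_right _ hsa.le
                rw [hC₀]; linarith
        calc |w y| ^ (p + 1) / L ^ a * rho N α y
            ≤ C₀ / s ^ a * |w y| ^ (p + 1) * rho N α y :=
              mul_le_mul_of_nonneg_right h6 hρy
          _ = C₀ / s ^ a * (|w y| ^ (p + 1) * rho N α y) := by ring
      exact h5.trans (le_add_of_nonneg_left hfirst)
  have hLHS : (∫ y in UnitBall N,
      |w y| ^ (p + 1) / (Real.log (2 + Real.exp (4 * s / (p - 1)) * (w y) ^ 2)) ^ a
        * rho N α y) ≤ ∫ y in UnitBall N,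
      C₀ * e * rho N α y + C₀ / s ^ a * (|w y| ^ (p + 1) * rho N α y) := by
    apply integral_mono_of_nonneg
    · filter_upwards [ae_restrict_mem hmeasB] with y hy
      have hbase : (1:ℝ) ≤ 2 + Real.exp (4 * s / (p - 1)) * (w y) ^ 2 := by
        nlinarith [Real.exp_pos (4 * s / (p - 1)), sq_nonneg (w y)]
      exact mul_nonneg (div_nonneg (Real.rpow_nonneg (abs_nonneg _) _)
        (Real.rpow_nonneg (Real.log_nonneg hbase) _)) (hρ0 y hy)
    · exact hgint
    · filter_upwards [ae_restrict_mem hmeasB] with y hy using hbound y hy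
  have hgval : (∫ y in UnitBall N,
      C₀ * e * rho N α y + C₀ / s ^ a * (|w y| ^ (p + 1) * rho N α y))
      = C₀ * e * K + C₀ / s ^ a * I := by
    rw [integral_add (hρint.const_mul _) (hwint.const_mul _),
      integral_const_mul, integral_const_mul]
  have hfinal : C₀ * e * K + C₀ / s ^ a * I
      ≤ C₀ * (K + 1) * e + (C₀ * (K + 1) / s ^ a) * I := by
    have h1 : C₀ * e * K ≤ C₀ * (K + 1) * e := by nlinarith [mul_pos hC₀pos he0]
    have h2 : C₀ / s ^ a * I ≤ C₀ * (K + 1) / s ^ a * I := by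
      apply mul_le_mul_of_nonneg_right _ hI0
      apply div_le_div_of_nonneg_right _ hsa.le
      nlinarith [mul_nonneg hC₀pos.le hK0]
    exact add_le_add h1 h2
  calc (∫ y in UnitBall N,
      |w y| ^ (p + 1) / (Real.log (2 + Real.exp (4 * s / (p - 1)) * (w y) ^ 2)) ^ a
        * rho N α y) ≤ ∫ y in UnitBall N,
        C₀ * e * rho N α y + C₀ / s ^ a * (|w y| ^ (p + 1) * rho N α y) := hLHS
    _ = C₀ * e * K + C₀ / s ^ a * I := hgval
    _ ≤ C₀ * (K + 1) * e + (C₀ * (K + 1) / s ^ a) * I := hfinal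
end
end

section
/- Fix N ≥ 2 and 1 < p < 1 + 4/(N−1), and set α = 2/(p−1) − (N−1)/2 > 0 and ρ(y) = (1−|y|²)^α on the open unit ball B ⊂ ℝ^N. There exists a constant C = C(N,p) > 0 such that for every w ∈ H¹_{loc,u}(ℝ^N): ∫_B w²|y|² ρ/(1−|y|²) dy ≤ C ∫_B |∇w|² ρ (1−|y|²) dy + C ∫_B w² ρ dy. -/
open MeasureTheory Real Filter Set
open scoped RealInnerProductSpace

noncomputable section
open Metric intervalIntegral
open scoped ENNReal

open Metric intervalIntegral in
open scoped ENNReal in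
lemma polar_lintegral {N : ℕ} (hN : 1 ≤ N) (f : EuclideanSpace ℝ (Fin N) → ℝ≥0∞)
    (hf : Measurable f) :
    ∫⁻ y, f y =
      ∫⁻ θ : Metric.sphere (0 : EuclideanSpace ℝ (Fin N)) 1,
        ∫⁻ r in Set.Ioi (0:ℝ), ENNReal.ofReal (r ^ (N-1)) * f (r • (θ : EuclideanSpace ℝ (Fin N)))
          ∂volume ∂((volume : Measure (EuclideanSpace ℝ (Fin N))).toSphere) := by
  classical
  haveI : Nontrivial (EuclideanSpace ℝ (Fin N)) := by
    have : 0 < Module.finrank ℝ (EuclideanSpace ℝ (Fin N)) := by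
      rw [finrank_euclideanSpace_fin]; omega
    exact Module.nontrivial_of_finrank_pos this
  have hdim : Module.finrank ℝ (EuclideanSpace ℝ (Fin N)) = N := finrank_euclideanSpace_fin
  have hsm : Measurable fun q : Metric.sphere (0 : EuclideanSpace ℝ (Fin N)) 1 × Set.Ioi (0:ℝ) =>
      (q.2 : ℝ) • (q.1 : EuclideanSpace ℝ (Fin N)) :=
    (measurable_subtype_coe.comp measurable_snd).smul (measurable_subtype_coe.comp measurable_fst)
  have hg : Measurable fun q : Metric.sphere (0 : EuclideanSpace ℝ (Fin N)) 1 × Set.Ioi (0:ℝ) =>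
      f ((q.2 : ℝ) • (q.1 : EuclideanSpace ℝ (Fin N))) := hf.comp hsm
  calc ∫⁻ y, f y
      = ∫⁻ x : ({0}ᶜ : Set (EuclideanSpace ℝ (Fin N))), f x
          ∂((volume : Measure (EuclideanSpace ℝ (Fin N))).comap (↑)) := by
        rw [lintegral_subtype_comap (measurableSet_singleton _).compl,
          restrict_compl_singleton]
    _ = ∫⁻ x : ({0}ᶜ : Set (EuclideanSpace ℝ (Fin N))),
          f (((homeomorphUnitSphereProd _ x).2 : ℝ) •
              ((homeomorphUnitSphereProd _ x).1 : EuclideanSpace ℝ (Fin N)))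
          ∂((volume : Measure (EuclideanSpace ℝ (Fin N))).comap (↑)) := by
        refine lintegral_congr fun x => ?_
        congr 1
        simp only [homeomorphUnitSphereProd_apply_fst_coe, homeomorphUnitSphereProd_apply_snd_coe,
          smul_smul]
        rw [mul_inv_cancel₀ (norm_ne_zero_iff.2 x.2), one_smul]
    _ = ∫⁻ q : Metric.sphere (0 : EuclideanSpace ℝ (Fin N)) 1 × Set.Ioi (0:ℝ),
          f ((q.2 : ℝ) • (q.1 : EuclideanSpace ℝ (Fin N)))
          ∂(((volume : Measure (EuclideanSpace ℝ (Fin N))).toSphere).prod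
            (.volumeIoiPow (Module.finrank ℝ (EuclideanSpace ℝ (Fin N)) - 1))) :=
        (Measure.measurePreserving_homeomorphUnitSphereProd _).lintegral_comp hg
    _ = ∫⁻ θ : Metric.sphere (0 : EuclideanSpace ℝ (Fin N)) 1,
          ∫⁻ r : Set.Ioi (0:ℝ), f ((r : ℝ) • (θ : EuclideanSpace ℝ (Fin N)))
            ∂(Measure.volumeIoiPow (Module.finrank ℝ (EuclideanSpace ℝ (Fin N)) - 1))
          ∂((volume : Measure (EuclideanSpace ℝ (Fin N))).toSphere) :=
        lintegral_prod _ hg.aemeasurable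
    _ = ∫⁻ θ : Metric.sphere (0 : EuclideanSpace ℝ (Fin N)) 1,
          ∫⁻ r in Set.Ioi (0:ℝ), ENNReal.ofReal (r ^ (N-1)) * f (r • (θ : EuclideanSpace ℝ (Fin N)))
            ∂volume ∂((volume : Measure (EuclideanSpace ℝ (Fin N))).toSphere) := by
        refine lintegral_congr fun θ => ?_
        have hk : Measurable fun r : Set.Ioi (0:ℝ) =>
            f ((r : ℝ) • (θ : EuclideanSpace ℝ (Fin N))) :=
          hf.comp (measurable_subtype_coe.smul_const _)
        rw [hdim, Measure.volumeIoiPow,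
          lintegral_withDensity_eq_lintegral_mul _
            (by exact (measurable_subtype_coe.pow_const _).ennreal_ofReal) hk]
        rw [← lintegral_subtype_comap (μ := (volume : Measure ℝ)) (measurableSet_Ioi (a := (0:ℝ)))
          (fun r : ℝ => ENNReal.ofReal (r ^ (N-1)) * f (r • (θ : EuclideanSpace ℝ (Fin N))))]
        rfl


lemma lintegral_Ioo_one_eq_iSup (F : ℝ → ℝ≥0∞) (hF : Measurable F) :
    ∫⁻ r in Set.Ioo (0:ℝ) 1, F r ∂volume
      = ⨆ n : ℕ, ∫⁻ r in Set.Ioo (0:ℝ) (1 - 1/(n+2:ℝ)), F r ∂volume := by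
  have hsub : ∀ n : ℕ, Set.Ioo (0:ℝ) (1 - 1/(n+2:ℝ)) ⊆ Set.Ioo (0:ℝ) 1 := by
    intro n r hr
    refine ⟨hr.1, hr.2.trans_le ?_⟩
    have : (0:ℝ) < 1/(n+2:ℝ) := by positivity
    linarith
  have hmono : Monotone fun n : ℕ => (Set.Ioo (0:ℝ) (1 - 1/(n+2:ℝ))).indicator F := by
    intro m n hmn
    refine Set.indicator_le_indicator_of_subset (Set.Ioo_subset_Ioo le_rfl ?_) (fun _ => zero_le)
    have h2 : (0:ℝ) < (m:ℝ)+2 := by positivity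
    have h3 : (m:ℝ)+2 ≤ (n:ℝ)+2 := by
      have := (Nat.cast_le (α := ℝ)).2 hmn; linarith
    have := one_div_le_one_div_of_le h2 h3
    linarith
  have hsup : ∀ r : ℝ, (⨆ n : ℕ, (Set.Ioo (0:ℝ) (1 - 1/(n+2:ℝ))).indicator F r)
      = (Set.Ioo (0:ℝ) 1).indicator F r := by
    intro r
    refine le_antisymm (iSup_le fun n =>
      Set.indicator_le_indicator_of_subset (hsub n) (fun _ => zero_le) r) ?_
    by_cases hr : r ∈ Set.Ioo (0:ℝ) 1
    · obtain ⟨n, hn⟩ := exists_nat_gt (1/(1 - r))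
      have h1r : 0 < 1 - r := by linarith [hr.2]
      have hlt : 1/((n:ℝ)+2) < 1 - r := by
        have h2 : 1/(1-r) < (n:ℝ)+2 := by linarith [hn, Nat.cast_nonneg (α := ℝ) n]
        have h3 : (0:ℝ) < (n:ℝ)+2 := by positivity
        have h4 := (div_lt_iff₀ h1r).1 h2
        exact (div_lt_iff₀ h3).2 (by nlinarith)
      have hrmem : r ∈ Set.Ioo (0:ℝ) (1 - 1/((n:ℝ)+2)) := ⟨hr.1, by linarith⟩
      rw [Set.indicator_of_mem hr]
      refine le_iSup_of_le n ?_
      rw [Set.indicator_of_mem hrmem]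
    · rw [Set.indicator_of_notMem hr]
      exact zero_le
  rw [← lintegral_indicator measurableSet_Ioo]
  calc ∫⁻ r, (Set.Ioo (0:ℝ) 1).indicator F r
      = ∫⁻ r, ⨆ n : ℕ, (Set.Ioo (0:ℝ) (1 - 1/(n+2:ℝ))).indicator F r := by
        exact lintegral_congr fun r => (hsup r).symm
    _ = ⨆ n : ℕ, ∫⁻ r, (Set.Ioo (0:ℝ) (1 - 1/(n+2:ℝ))).indicator F r :=
        lintegral_iSup (fun n => hF.indicator measurableSet_Ioo) hmono
    _ = ⨆ n : ℕ, ∫⁻ r in Set.Ioo (0:ℝ) (1 - 1/(n+2:ℝ)), F r ∂volume := by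
        refine iSup_congr fun n => lintegral_indicator measurableSet_Ioo F


set_option maxHeartbeats 1000000 in
lemma measurable_rpow_const' (c : ℝ) : Measurable fun x : ℝ => x ^ c := by
  classical
  have h : (fun x : ℝ => x ^ c) = ({(0:ℝ)} : Set ℝ).piecewise (fun _ => (0:ℝ) ^ c)
      (fun x => Real.exp (Real.log x * c) * if x < 0 then Real.cos (c * Real.pi) else 1) := by
    funext x
    rcases lt_trichotomy x 0 with hx | hx | hx
    · rw [Set.piecewise_eq_of_notMem _ _ _ (by simp [hx.ne]), if_pos hx,
        Real.rpow_def_of_neg hx]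
    · subst hx
      rw [Set.piecewise_eq_of_mem _ _ _ (Set.mem_singleton (0:ℝ))]
    · rw [Set.piecewise_eq_of_notMem _ _ _ (by simp [hx.ne']), if_neg (not_lt.2 hx.le),
        mul_one, Real.rpow_def_of_pos hx]
  rw [h]
  exact Measurable.piecewise (measurableSet_singleton 0) measurable_const
    ((Real.measurable_log.mul measurable_const).exp.mul
      (Measurable.ite measurableSet_Iio measurable_const measurable_const))

set_option maxHeartbeats 2000000 in
lemma ray_estimate {N : ℕ} (hN : 1 ≤ N) {α : ℝ} (hα : 0 < α)
    (w : EuclideanSpace ℝ (Fin N) → ℝ) (hw : Differentiable ℝ w)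
    (θ : EuclideanSpace ℝ (Fin N)) (hθ : ‖θ‖ = 1) :
    ∫⁻ r in Set.Ioo (0:ℝ) 1,
        ENNReal.ofReal (w (r • θ) ^ 2 * (r ^ (N+1) * (1 - r^2) ^ (α-1))) ∂volume
      ≤ ENNReal.ofReal ((N:ℝ)/α) *
          ∫⁻ r in Set.Ioo (0:ℝ) 1,
            ENNReal.ofReal (w (r • θ) ^ 2 * (r ^ (N-1) * (1 - r^2) ^ α)) ∂volume
        + ENNReal.ofReal (1/α^2) *
          ∫⁻ r in Set.Ioo (0:ℝ) 1,
            ENNReal.ofReal (‖gradient w (r • θ)‖ ^ 2 * (r ^ (N-1) * (1 - r^2) ^ (α+1))) ∂volume := by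
  classical
  set P : ℝ → ℝ := fun r => w (r • θ) ^ 2 * (r ^ (N+1) * (1 - r^2) ^ (α-1)) with hPdef
  set Q : ℝ → ℝ := fun r => w (r • θ) ^ 2 * (r ^ (N-1) * (1 - r^2) ^ α) with hQdef
  set R : ℝ → ℝ := fun r => ‖gradient w (r • θ)‖ ^ 2 * (r ^ (N-1) * (1 - r^2) ^ (α+1)) with hRdef
  show (∫⁻ r in Set.Ioo (0:ℝ) 1, ENNReal.ofReal (P r) ∂volume)
      ≤ ENNReal.ofReal ((N:ℝ)/α) * (∫⁻ r in Set.Ioo (0:ℝ) 1, ENNReal.ofReal (Q r) ∂volume)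
        + ENNReal.ofReal (1/α^2) * ∫⁻ r in Set.Ioo (0:ℝ) 1, ENNReal.ofReal (R r) ∂volume
  -- basic measurability and continuity facts
  have hucont : Continuous fun r : ℝ => w (r • θ) :=
    hw.continuous.comp (continuous_id.smul continuous_const)
  have hgradmeas : Measurable fun x : EuclideanSpace ℝ (Fin N) => gradient w x := by
    have : (fun x : EuclideanSpace ℝ (Fin N) => gradient w x)
        = fun x => (InnerProductSpace.toDual ℝ (EuclideanSpace ℝ (Fin N))).symm
            (fderiv ℝ w x) := rfl
    rw [this]
    exact (InnerProductSpace.toDual ℝ (EuclideanSpace ℝ (Fin N))).symm.continuous.measurable.comp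
      (measurable_fderiv ℝ w)
  have hvmeas : Measurable fun r : ℝ => ‖gradient w (r • θ)‖ :=
    (hgradmeas.norm).comp (measurable_id.smul_const θ)
  have hbase : Measurable fun r : ℝ => 1 - r^2 :=
    measurable_const.sub (measurable_id.pow_const 2)
  have hPmeas : Measurable P :=
    ((hucont.measurable.pow_const 2)).mul
      ((measurable_id.pow_const (N+1)).mul ((measurable_rpow_const' (α-1)).comp hbase))
  have hQmeas : Measurable Q :=
    ((hucont.measurable.pow_const 2)).mul
      ((measurable_id.pow_const (N-1)).mul ((measurable_rpow_const' α).comp hbase))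
  have hRmeas : Measurable R :=
    (hvmeas.pow_const 2).mul
      ((measurable_id.pow_const (N-1)).mul ((measurable_rpow_const' (α+1)).comp hbase))
  have hu' : ∀ r : ℝ, HasDerivAt (fun t => w (t • θ)) (fderiv ℝ w (r • θ) θ) r := by
    intro r
    have h1 : HasDerivAt (fun t : ℝ => t • θ) θ r := by
      simpa using (hasDerivAt_id r).smul_const θ
    exact ((hw (r • θ)).hasFDerivAt).comp_hasDerivAt r h1
  have habs : ∀ r : ℝ, |fderiv ℝ w (r • θ) θ| ≤ ‖gradient w (r • θ)‖ := by
    intro r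
    have h1 : fderiv ℝ w (r • θ) θ = ⟪gradient w (r • θ), θ⟫ :=
      (InnerProductSpace.toDual_symm_apply).symm
    rw [h1]
    calc |⟪gradient w (r • θ), θ⟫| ≤ ‖gradient w (r • θ)‖ * ‖θ‖ :=
          abs_real_inner_le_norm _ _
      _ = ‖gradient w (r • θ)‖ := by rw [hθ, mul_one]
  -- continuity of Q and R integrand pieces
  have hrpow_cont : ∀ c : ℝ, 0 ≤ c → Continuous fun r : ℝ => (1 - r^2) ^ c := by
    intro c hc
    refine continuous_iff_continuousAt.2 fun r => ?_
    exact (Real.continuousAt_rpow_const _ _ (Or.inr hc)).comp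
      ((continuous_const.sub (continuous_pow 2)).continuousAt)
  have hQcont : Continuous Q :=
    ((hucont.pow 2)).mul ((continuous_pow (N-1)).mul (hrpow_cont α hα.le))
  -- nonnegativity on Ioo 0 1
  have hQnn : ∀ r ∈ Set.Ioo (0:ℝ) 1, 0 ≤ Q r := by
    intro r hr
    have h1 : (0:ℝ) < 1 - r^2 := by nlinarith [hr.1, hr.2]
    exact mul_nonneg (sq_nonneg _)
      (mul_nonneg (pow_nonneg hr.1.le _) (Real.rpow_nonneg h1.le _))
  have hRnn : ∀ r ∈ Set.Ioo (0:ℝ) 1, 0 ≤ R r := by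
    intro r hr
    have h1 : (0:ℝ) < 1 - r^2 := by nlinarith [hr.1, hr.2]
    exact mul_nonneg (sq_nonneg _)
      (mul_nonneg (pow_nonneg hr.1.le _) (Real.rpow_nonneg h1.le _))
  have hQae : 0 ≤ᵐ[volume.restrict (Set.Ioo (0:ℝ) 1)] Q := by
    filter_upwards [ae_restrict_mem measurableSet_Ioo] with r hr using hQnn r hr
  have hRae : 0 ≤ᵐ[volume.restrict (Set.Ioo (0:ℝ) 1)] R := by
    filter_upwards [ae_restrict_mem measurableSet_Ioo] with r hr using hRnn r hr
  -- main case split on finiteness of the gradient term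
  by_cases hRtop : (∫⁻ r in Set.Ioo (0:ℝ) 1, ENNReal.ofReal (R r) ∂volume) = ⊤
  · rw [hRtop, ENNReal.mul_top (by simp [ENNReal.ofReal_eq_zero]; positivity)]
    simp
  have hRint : IntegrableOn R (Set.Ioo (0:ℝ) 1) volume :=
    ⟨hRmeas.aestronglyMeasurable, (hasFiniteIntegral_iff_ofReal hRae).2 (Ne.lt_top hRtop)⟩
  have hQint : IntegrableOn Q (Set.Ioo (0:ℝ) 1) volume := by
    have hQ1 := hQcont.integrableOn_Icc (a := (0:ℝ)) (b := 1) (μ := volume)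
    exact hQ1.mono_set Set.Ioo_subset_Icc_self
  have hQIpos : 0 ≤ ∫ r in Set.Ioo (0:ℝ) 1, Q r := setIntegral_nonneg measurableSet_Ioo hQnn
  have hRIpos : 0 ≤ ∫ r in Set.Ioo (0:ℝ) 1, R r := setIntegral_nonneg measurableSet_Ioo hRnn
  -- rewrite the RHS lintegrals as ofReal of Bochner integrals
  have hc1 : (0:ℝ) ≤ (N:ℝ)/α := by positivity
  have hc2 : (0:ℝ) ≤ 1/α^2 := by positivity
  have hx1 : (0:ℝ) ≤ (N:ℝ)/α * ∫ r in Set.Ioo (0:ℝ) 1, Q r := mul_nonneg hc1 hQIpos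
  have hx2 : (0:ℝ) ≤ 1/α^2 * ∫ r in Set.Ioo (0:ℝ) 1, R r := mul_nonneg hc2 hRIpos
  rw [← ofReal_integral_eq_lintegral_ofReal hQint hQae,
    ← ofReal_integral_eq_lintegral_ofReal hRint hRae,
    ← ENNReal.ofReal_mul hc1, ← ENNReal.ofReal_mul hc2,
    ← ENNReal.ofReal_add hx1 hx2]
  rw [lintegral_Ioo_one_eq_iSup _ hPmeas.ennreal_ofReal]
  refine iSup_le fun n => ?_
  set b : ℝ := 1 - 1/(n+2:ℝ) with hbdef
  have hbx : (0:ℝ) < 1/(n+2:ℝ) := by positivity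
  have hbx2 : 1/((n:ℝ)+2) ≤ 1/2 := by
    apply one_div_le_one_div_of_le
    · norm_num
    · have : (0:ℝ) ≤ (n:ℝ) := Nat.cast_nonneg n
      linarith
  have hb0 : 0 < b := by rw [hbdef]; linarith
  have hb1 : b < 1 := by rw [hbdef]; linarith
  have hpos : ∀ r ∈ Set.Icc (0:ℝ) b, 0 < 1 - r^2 := by
    intro r hr
    nlinarith [hr.1, hr.2]
  have hIocsub : Set.Ioc (0:ℝ) b ⊆ Set.Ioo (0:ℝ) 1 :=
    fun x hx => ⟨hx.1, lt_of_le_of_lt hx.2 hb1⟩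
  -- integrability of P on [0, b]
  have hPcontOn : ContinuousOn P (Set.Icc (0:ℝ) b) := by
    refine ContinuousOn.mul ((hucont.pow 2).continuousOn) (ContinuousOn.mul
      ((continuous_pow (N+1)).continuousOn) (ContinuousOn.rpow_const
        ((continuous_const.sub (continuous_pow 2)).continuousOn) ?_))
    intro r hr
    exact Or.inl (hpos r hr).ne'
  have hPintIcc : IntegrableOn P (Set.Icc (0:ℝ) b) volume :=
    hPcontOn.integrableOn_compact (μ := volume) isCompact_Icc
  have hPae_b : 0 ≤ᵐ[volume.restrict (Set.Ioo (0:ℝ) b)] P := by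
    filter_upwards [ae_restrict_mem measurableSet_Ioo] with r hr
    have h1 : (0:ℝ) < 1 - r^2 := hpos r ⟨hr.1.le, hr.2.le⟩
    exact mul_nonneg (sq_nonneg _)
      (mul_nonneg (pow_nonneg hr.1.le _) (Real.rpow_nonneg h1.le _))
  rw [← ofReal_integral_eq_lintegral_ofReal (hPintIcc.mono_set Set.Ioo_subset_Icc_self) hPae_b]
  apply ENNReal.ofReal_le_ofReal
  -- now a purely real inequality
  set u' : ℝ → ℝ := fun r => fderiv ℝ w (r • θ) θ with hu'def
  set φ : ℝ → ℝ := fun r => -(1/(2*α)) * (r^N * (1-r^2)^α) with hφdef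
  set φ' : ℝ → ℝ := fun r =>
    r^(N+1) * (1-r^2)^(α-1) - ((N:ℝ)/(2*α)) * (r^(N-1) * (1-r^2)^α) with hφ'def
  set D₁ : ℝ → ℝ := fun r => (2 * w (r • θ) * u' r) * φ r with hD₁def
  set D₂ : ℝ → ℝ := fun r => w (r • θ)^2 * φ' r with hD₂def
  have hNR : (N:ℝ) ≥ 1 := by exact_mod_cast hN
  have hφderiv : ∀ r ∈ Set.Icc (0:ℝ) b, HasDerivAt φ (φ' r) r := by
    intro r hr
    have h1 : HasDerivAt (fun t : ℝ => 1 - t^2) (-(2 * r^1)) r := by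
      simpa using ((hasDerivAt_pow 2 r).const_sub 1)
    have h2 : HasDerivAt (fun t : ℝ => (1-t^2)^α)
        (-(2 * r^1) * α * (1-r^2)^(α-1)) r :=
      h1.rpow_const (Or.inl (hpos r hr).ne')
    have h3 : HasDerivAt (fun t : ℝ => t^N * (1-t^2)^α)
        ((N:ℝ) * r^(N-1) * (1-r^2)^α + r^N * (-(2 * r^1) * α * (1-r^2)^(α-1))) r :=
      (hasDerivAt_pow N r).mul h2
    have h4 := h3.const_mul (-(1/(2*α)))
    have heq : -(1/(2*α)) * ((N:ℝ) * r^(N-1) * (1-r^2)^α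
        + r^N * (-(2 * r^1) * α * (1-r^2)^(α-1))) = φ' r := by
      have e : r ^ (N+1) = r^N * r := pow_succ r N
      simp only [hφ'def]
      rw [pow_one, e]
      field_simp
      ring
    rw [← heq]
    exact h4
  have hDeriv : ∀ r ∈ Set.uIcc (0:ℝ) b,
      HasDerivAt (fun t => w (t • θ)^2 * φ t) (D₁ r + D₂ r) r := by
    intro r hr
    rw [Set.uIcc_of_le hb0.le] at hr
    have h1 : HasDerivAt (fun t => w (t • θ)^2) (2 * w (r • θ) * u' r) r := by
      have := (hu' r).fun_pow 2
      simpa [hu'def, mul_comm] using this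
    have := h1.fun_mul (hφderiv r hr)
    simpa [hD₁def, hD₂def] using this
  -- pointwise bound for D₁
  have hbound : ∀ r ∈ Set.Icc (0:ℝ) b, |D₁ r| ≤ (1/2) * P r + (1/(2*α^2)) * R r := by
    intro r hr
    obtain ⟨hr0, hrb⟩ := hr
    have h1r : 0 < 1 - r^2 := hpos r ⟨hr0, hrb⟩
    have hXnn : 0 ≤ r ^ (N+1) * (1-r^2)^(α-1) :=
      mul_nonneg (pow_nonneg hr0 _) (Real.rpow_nonneg h1r.le _)
    have hYnn : 0 ≤ r ^ (N-1) * (1-r^2)^(α+1) :=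
      mul_nonneg (pow_nonneg hr0 _) (Real.rpow_nonneg h1r.le _)
    set a1 := |w (r • θ)| * Real.sqrt (r^(N+1) * (1-r^2)^(α-1)) with ha1
    set a2 := (1/α) * (‖gradient w (r • θ)‖ * Real.sqrt (r^(N-1) * (1-r^2)^(α+1))) with ha2
    have key1 : a1^2 = w (r • θ)^2 * (r^(N+1) * (1-r^2)^(α-1)) := by
      rw [ha1, mul_pow, sq_abs, Real.sq_sqrt hXnn]
    have key2 : a2^2 = (1/α^2) * (‖gradient w (r • θ)‖^2 * (r^(N-1) * (1-r^2)^(α+1))) := by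
      rw [ha2, mul_pow, mul_pow, Real.sq_sqrt hYnn]
      field_simp
    have prod_sqrt : Real.sqrt (r^(N+1) * (1-r^2)^(α-1)) * Real.sqrt (r^(N-1) * (1-r^2)^(α+1))
        = r^N * (1-r^2)^α := by
      rw [← Real.sqrt_mul hXnn]
      have e2 : r^(N+1) * r^(N-1) = (r^N)^2 := by
        rw [← pow_add, ← pow_mul]
        congr 1
        omega
      have e3 : (1-r^2)^(α-1) * (1-r^2)^(α+1) = ((1-r^2)^α)^2 := by
        rw [← Real.rpow_add h1r, ← Real.rpow_natCast ((1 - r^2) ^ α) 2,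
          ← Real.rpow_mul h1r.le]
        congr 1
        push_cast
        ring
      have e1 : r^(N+1) * (1-r^2)^(α-1) * (r^(N-1) * (1-r^2)^(α+1))
          = (r^N * (1-r^2)^α)^2 := by
        calc r^(N+1) * (1-r^2)^(α-1) * (r^(N-1) * (1-r^2)^(α+1))
            = (r^(N+1) * r^(N-1)) * ((1-r^2)^(α-1) * (1-r^2)^(α+1)) := by ring
          _ = (r^N)^2 * ((1-r^2)^α)^2 := by rw [e2, e3]
          _ = (r^N * (1-r^2)^α)^2 := by ring
      rw [e1, Real.sqrt_sq (mul_nonneg (pow_nonneg hr0 _) (Real.rpow_nonneg h1r.le _))]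
    have hφabs : |φ r| = (1/(2*α)) * (r^N * (1-r^2)^α) := by
      simp only [hφdef]
      have h2 : 0 ≤ r^N * (1-r^2)^α :=
        mul_nonneg (pow_nonneg hr0 _) (Real.rpow_nonneg h1r.le _)
      rw [abs_of_nonpos (by nlinarith [one_div_pos.2 (by positivity : (0:ℝ) < 2*α)])]
      ring
    have hab : |D₁ r| ≤ a1 * a2 := by
      have hstep : |D₁ r| ≤ (2 * |w (r • θ)| * ‖gradient w (r • θ)‖)
          * ((1/(2*α)) * (r^N * (1-r^2)^α)) := by
        simp only [hD₁def]
        calc |(2 * w (r • θ) * u' r) * φ r| = |2 * w (r • θ) * u' r| * |φ r| := abs_mul _ _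
          _ ≤ (2 * |w (r • θ)| * ‖gradient w (r • θ)‖) * ((1/(2*α)) * (r^N * (1-r^2)^α)) := by
              rw [hφabs]
              apply mul_le_mul_of_nonneg_right _ (by positivity)
              rw [abs_mul, abs_mul, abs_two]
              exact mul_le_mul_of_nonneg_left (habs r)
                (by positivity)
      have heq : a1 * a2 = (2 * |w (r • θ)| * ‖gradient w (r • θ)‖)
          * ((1/(2*α)) * (r^N * (1-r^2)^α)) := by
        calc a1 * a2 = (1/α) * ((|w (r • θ)| * ‖gradient w (r • θ)‖)
            * (Real.sqrt (r^(N+1) * (1-r^2)^(α-1)) * Real.sqrt (r^(N-1) * (1-r^2)^(α+1)))) := by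
              rw [ha1, ha2]; ring
          _ = (1/α) * ((|w (r • θ)| * ‖gradient w (r • θ)‖) * (r^N * (1-r^2)^α)) := by
              rw [prod_sqrt]
          _ = (2 * |w (r • θ)| * ‖gradient w (r • θ)‖)
              * ((1/(2*α)) * (r^N * (1-r^2)^α)) := by
              field_simp
      rw [heq]
      exact hstep
    have h2ab := two_mul_le_add_sq a1 a2
    have ha1nn : 0 ≤ a1 := mul_nonneg (abs_nonneg _) (Real.sqrt_nonneg _)
    have ha2nn : 0 ≤ a2 := by positivity
    calc |D₁ r| ≤ a1 * a2 := hab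
      _ ≤ (a1^2 + a2^2)/2 := by nlinarith
      _ = (1/2) * P r + (1/(2*α^2)) * R r := by
          simp only [hPdef, hRdef]
          rw [key1, key2]
          ring
  -- interval integrability facts on [0, b]
  have hPii : IntervalIntegrable P volume 0 b :=
    ContinuousOn.intervalIntegrable (by rw [Set.uIcc_of_le hb0.le]; exact hPcontOn)
  have hQii : IntervalIntegrable Q volume 0 b := hQcont.intervalIntegrable _ _
  have hRii : IntervalIntegrable R volume 0 b :=
    (intervalIntegrable_iff_integrableOn_Ioc_of_le hb0.le).2 (hRint.mono_set hIocsub)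
  have hφ'contOn : ContinuousOn φ' (Set.Icc (0:ℝ) b) := by
    simp only [hφ'def]
    refine ContinuousOn.sub (ContinuousOn.mul ((continuous_pow (N+1)).continuousOn)
      (ContinuousOn.rpow_const ((continuous_const.sub (continuous_pow 2)).continuousOn)
        (fun r hr => Or.inl (hpos r hr).ne'))) ?_
    exact ContinuousOn.mul continuousOn_const (ContinuousOn.mul
      ((continuous_pow (N-1)).continuousOn) ((hrpow_cont α hα.le).continuousOn))
  have hD₂ii : IntervalIntegrable D₂ volume 0 b := by
    refine ContinuousOn.intervalIntegrable ?_
    rw [Set.uIcc_of_le hb0.le]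
    exact ((hucont.pow 2).continuousOn).mul hφ'contOn
  have hφcont : Continuous φ := by
    simp only [hφdef]
    exact continuous_const.mul ((continuous_pow N).mul (hrpow_cont α hα.le))
  have hD₁meas : Measurable D₁ := by
    simp only [hD₁def]
    exact ((measurable_const.mul hucont.measurable).mul
      ((measurable_fderiv_apply_const ℝ w θ).comp (measurable_id.smul_const θ))).mul
      hφcont.measurable
  have hmii : IntervalIntegrable (fun r => (1/2) * P r + (1/(2*α^2)) * R r) volume 0 b :=
    (hPii.const_mul _).add (hRii.const_mul _)
  have hD₁ii : IntervalIntegrable D₁ volume 0 b := by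
    rw [intervalIntegrable_iff_integrableOn_Ioc_of_le hb0.le]
    have hmint : IntegrableOn (fun r => (1/2) * P r + (1/(2*α^2)) * R r) (Set.Ioc 0 b) volume :=
      (intervalIntegrable_iff_integrableOn_Ioc_of_le hb0.le).1 hmii
    refine Integrable.mono hmint hD₁meas.aestronglyMeasurable ?_
    filter_upwards [ae_restrict_mem measurableSet_Ioc] with r hr
    rw [Real.norm_eq_abs, Real.norm_eq_abs]
    exact (hbound r ⟨hr.1.le, hr.2⟩).trans (le_abs_self _)
  -- the fundamental theorem of calculus
  have hftc : ∫ r in (0:ℝ)..b, (D₁ r + D₂ r)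
      = w (b • θ)^2 * φ b - w ((0:ℝ) • θ)^2 * φ 0 :=
    intervalIntegral.integral_eq_sub_of_hasDerivAt hDeriv (hD₁ii.add hD₂ii)
  have hφ0 : φ 0 = 0 := by
    simp only [hφdef]
    rw [zero_pow (by omega : N ≠ 0)]
    ring
  have hφb : φ b ≤ 0 := by
    simp only [hφdef]
    have h2 : 0 ≤ b^N * (1-b^2)^α :=
      mul_nonneg (pow_nonneg hb0.le _) (Real.rpow_nonneg (by nlinarith) _)
    nlinarith [one_div_pos.2 (by positivity : (0:ℝ) < 2*α)]
  have hle0 : ∫ r in (0:ℝ)..b, (D₁ r + D₂ r) ≤ 0 := by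
    rw [hftc, hφ0]
    have := mul_nonpos_of_nonneg_of_nonpos (sq_nonneg (w (b • θ))) hφb
    simp only [mul_zero]
    linarith
  have hsplit : ∫ r in (0:ℝ)..b, (D₁ r + D₂ r)
      = (∫ r in (0:ℝ)..b, D₁ r) + ∫ r in (0:ℝ)..b, D₂ r :=
    intervalIntegral.integral_add hD₁ii hD₂ii
  have hD₂eq : ∀ r, D₂ r = P r - ((N:ℝ)/(2*α)) * Q r := by
    intro r
    simp only [hD₂def, hφ'def, hPdef, hQdef]
    ring
  have hintD₂ : ∫ r in (0:ℝ)..b, D₂ r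
      = (∫ r in (0:ℝ)..b, P r) - ((N:ℝ)/(2*α)) * ∫ r in (0:ℝ)..b, Q r := by
    rw [intervalIntegral.integral_congr (fun r _ => hD₂eq r),
      intervalIntegral.integral_sub hPii (hQii.const_mul _),
      intervalIntegral.integral_const_mul]
  have habs_int : -(∫ r in (0:ℝ)..b, D₁ r) ≤ ∫ r in (0:ℝ)..b, |D₁ r| := by
    have h1 := intervalIntegral.abs_integral_le_integral_abs (f := D₁) (μ := volume)
      (a := 0) (b := b) hb0.le
    have h2 := neg_abs_le (∫ r in (0:ℝ)..b, D₁ r)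
    linarith
  have hmono_int : ∫ r in (0:ℝ)..b, |D₁ r|
      ≤ ∫ r in (0:ℝ)..b, ((1/2) * P r + (1/(2*α^2)) * R r) :=
    intervalIntegral.integral_mono_on hb0.le hD₁ii.abs hmii (fun r hr => hbound r hr)
  have hm_split : ∫ r in (0:ℝ)..b, ((1/2) * P r + (1/(2*α^2)) * R r)
      = (1/2) * (∫ r in (0:ℝ)..b, P r) + (1/(2*α^2)) * ∫ r in (0:ℝ)..b, R r := by
    rw [intervalIntegral.integral_add (hPii.const_mul _) (hRii.const_mul _),
      intervalIntegral.integral_const_mul, intervalIntegral.integral_const_mul]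
  -- monotonicity to the full interval
  have hQb_le : ∫ r in (0:ℝ)..b, Q r ≤ ∫ r in Set.Ioo (0:ℝ) 1, Q r := by
    rw [intervalIntegral.integral_of_le hb0.le]
    exact setIntegral_mono_set hQint hQae (HasSubset.Subset.eventuallyLE hIocsub)
  have hRb_le : ∫ r in (0:ℝ)..b, R r ≤ ∫ r in Set.Ioo (0:ℝ) 1, R r := by
    rw [intervalIntegral.integral_of_le hb0.le]
    exact setIntegral_mono_set hRint hRae (HasSubset.Subset.eventuallyLE hIocsub)
  have hPb_eq : ∫ r in Set.Ioo (0:ℝ) b, P r = ∫ r in (0:ℝ)..b, P r := by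
    rw [intervalIntegral.integral_of_le hb0.le, integral_Ioc_eq_integral_Ioo]
  -- put everything together
  have hkey : (∫ r in (0:ℝ)..b, P r) - ((N:ℝ)/(2*α)) * (∫ r in (0:ℝ)..b, Q r)
      ≤ (1/2) * (∫ r in (0:ℝ)..b, P r) + (1/(2*α^2)) * ∫ r in (0:ℝ)..b, R r := by
    have h1 : (∫ r in (0:ℝ)..b, P r) - ((N:ℝ)/(2*α)) * (∫ r in (0:ℝ)..b, Q r)
        = (∫ r in (0:ℝ)..b, (D₁ r + D₂ r)) - ∫ r in (0:ℝ)..b, D₁ r := by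
      rw [hsplit, hintD₂]; ring
    rw [h1]
    calc (∫ r in (0:ℝ)..b, (D₁ r + D₂ r)) - ∫ r in (0:ℝ)..b, D₁ r
        ≤ -(∫ r in (0:ℝ)..b, D₁ r) := by linarith
      _ ≤ ∫ r in (0:ℝ)..b, |D₁ r| := habs_int
      _ ≤ ∫ r in (0:ℝ)..b, ((1/2) * P r + (1/(2*α^2)) * R r) := hmono_int
      _ = (1/2) * (∫ r in (0:ℝ)..b, P r) + (1/(2*α^2)) * ∫ r in (0:ℝ)..b, R r := hm_split
  have hm1 := mul_le_mul_of_nonneg_left hQb_le hc1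
  have hm2 := mul_le_mul_of_nonneg_left hRb_le hc2
  have eN : (N:ℝ)/α = 2*((N:ℝ)/(2*α)) := by field_simp
  have eα : (1:ℝ)/α^2 = 2*(1/(2*α^2)) := by field_simp
  rw [hPb_eq]
  nlinarith [hkey, hm1, hm2]


set_option maxHeartbeats 2000000 in
/-- Hardy-type inequality on the unit ball for `w ∈ H¹_{loc,u}(ℝ^N)`. -/
theorem hardy_inequality (N : ℕ) (hN : 2 ≤ N) (p α : ℝ) (hp : 1 < p)
    (hpc : p < 1 + 4 / ((N : ℝ) - 1)) (hα : α = 2 / (p - 1) - ((N : ℝ) - 1) / 2) :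
    ∃ C > 0, ∀ w : EuclideanSpace ℝ (Fin N) → ℝ, Differentiable ℝ w →
      (∃ M : ℝ, ∀ d : EuclideanSpace ℝ (Fin N),
        IntegrableOn (fun y => (w y) ^ 2) (Metric.ball d 1) ∧
        IntegrableOn (fun y => ‖gradient w y‖ ^ 2) (Metric.ball d 1) ∧
        (∫ y in Metric.ball d 1, (w y) ^ 2) ≤ M ∧
        (∫ y in Metric.ball d 1, ‖gradient w y‖ ^ 2) ≤ M) →
      (∫ y in UnitBall N, (w y) ^ 2 * ‖y‖ ^ 2 * rho N α y / (1 - ‖y‖ ^ 2)) ≤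
        C * (∫ y in UnitBall N, ‖gradient w y‖ ^ 2 * rho N α y * (1 - ‖y‖ ^ 2)) +
          C * ∫ y in UnitBall N, (w y) ^ 2 * rho N α y := by
  classical
  have hN1 : 1 ≤ N := le_trans one_le_two hN
  have hNR : (2:ℝ) ≤ (N:ℝ) := by exact_mod_cast hN
  have hp1 : (0:ℝ) < p - 1 := by linarith
  have hNpos : (0:ℝ) < (N:ℝ) - 1 := by linarith
  have hα0 : 0 < α := by
    rw [hα]
    have key : (p-1) * ((N:ℝ)-1) < 4 := by
      have h4 : p - 1 < 4 / ((N:ℝ)-1) := by linarith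
      exact (lt_div_iff₀ hNpos).1 h4
    have h2 : ((N:ℝ)-1)/2 < 2/(p-1) := by
      rw [div_lt_div_iff₀ (by norm_num) hp1]
      nlinarith
    linarith
  refine ⟨(N:ℝ)/α + 1/α^2, by positivity, ?_⟩
  intro w hw hM
  obtain ⟨M, hM⟩ := hM
  obtain ⟨hw2int, hgint, -, -⟩ := hM 0
  simp only [UnitBall, rho]
  set h1 : EuclideanSpace ℝ (Fin N) → ℝ :=
    fun y => w y ^ 2 * ‖y‖ ^ 2 * (1 - ‖y‖ ^ 2) ^ (α - 1) with hh1def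
  set h2 : EuclideanSpace ℝ (Fin N) → ℝ :=
    fun y => ‖gradient w y‖ ^ 2 * (1 - ‖y‖ ^ 2) ^ (α + 1) with hh2def
  set h3 : EuclideanSpace ℝ (Fin N) → ℝ :=
    fun y => w y ^ 2 * (1 - ‖y‖ ^ 2) ^ α with hh3def
  have hballpos : ∀ y ∈ Metric.ball (0 : EuclideanSpace ℝ (Fin N)) 1, 0 < 1 - ‖y‖ ^ 2 := by
    intro y hy
    rw [mem_ball_zero_iff] at hy
    nlinarith [norm_nonneg y]
  -- rewrite the three Bochner integrals
  have e1 : ∫ y in Metric.ball (0 : EuclideanSpace ℝ (Fin N)) 1,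
      w y ^ 2 * ‖y‖ ^ 2 * (1 - ‖y‖ ^ 2) ^ α / (1 - ‖y‖ ^ 2)
      = ∫ y in Metric.ball (0 : EuclideanSpace ℝ (Fin N)) 1, h1 y := by
    refine setIntegral_congr_fun measurableSet_ball fun y hy => ?_
    simp only [hh1def]
    rw [Real.rpow_sub_one (hballpos y hy).ne']
    ring
  have e2 : ∫ y in Metric.ball (0 : EuclideanSpace ℝ (Fin N)) 1,
      ‖gradient w y‖ ^ 2 * (1 - ‖y‖ ^ 2) ^ α * (1 - ‖y‖ ^ 2)
      = ∫ y in Metric.ball (0 : EuclideanSpace ℝ (Fin N)) 1, h2 y := by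
    refine setIntegral_congr_fun measurableSet_ball fun y hy => ?_
    simp only [hh2def]
    rw [Real.rpow_add_one (hballpos y hy).ne']
    ring
  have e3 : ∫ y in Metric.ball (0 : EuclideanSpace ℝ (Fin N)) 1,
      w y ^ 2 * (1 - ‖y‖ ^ 2) ^ α
      = ∫ y in Metric.ball (0 : EuclideanSpace ℝ (Fin N)) 1, h3 y := rfl
  rw [e1, e2, e3]
  -- measurability
  have hgradmeas : Measurable fun x : EuclideanSpace ℝ (Fin N) => gradient w x := by
    have : (fun x : EuclideanSpace ℝ (Fin N) => gradient w x)
        = fun x => (InnerProductSpace.toDual ℝ (EuclideanSpace ℝ (Fin N))).symm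
            (fderiv ℝ w x) := rfl
    rw [this]
    exact (InnerProductSpace.toDual ℝ (EuclideanSpace ℝ (Fin N))).symm.continuous.measurable.comp
      (measurable_fderiv ℝ w)
  have hbase : Measurable fun y : EuclideanSpace ℝ (Fin N) => 1 - ‖y‖ ^ 2 :=
    measurable_const.sub ((measurable_norm).pow_const 2)
  have hh1meas : Measurable h1 :=
    ((hw.continuous.measurable.pow_const 2).mul ((measurable_norm).pow_const 2)).mul
      ((measurable_rpow_const' (α-1)).comp hbase)
  have hh2meas : Measurable h2 :=
    ((hgradmeas.norm).pow_const 2).mul ((measurable_rpow_const' (α+1)).comp hbase)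
  have hh3meas : Measurable h3 :=
    (hw.continuous.measurable.pow_const 2).mul ((measurable_rpow_const' α).comp hbase)
  -- nonnegativity on the ball
  have hh1nn : 0 ≤ᵐ[volume.restrict (Metric.ball (0 : EuclideanSpace ℝ (Fin N)) 1)] h1 := by
    filter_upwards [ae_restrict_mem measurableSet_ball] with y hy
    simp only [hh1def]
    have := hballpos y hy
    positivity
  have hh2nn : 0 ≤ᵐ[volume.restrict (Metric.ball (0 : EuclideanSpace ℝ (Fin N)) 1)] h2 := by
    filter_upwards [ae_restrict_mem measurableSet_ball] with y hy
    simp only [hh2def]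
    have := hballpos y hy
    positivity
  have hh3nn : 0 ≤ᵐ[volume.restrict (Metric.ball (0 : EuclideanSpace ℝ (Fin N)) 1)] h3 := by
    filter_upwards [ae_restrict_mem measurableSet_ball] with y hy
    simp only [hh3def]
    have := hballpos y hy
    positivity
  -- integrability of h2 and h3
  have hrpow_le_one : ∀ (c : ℝ), 0 ≤ c →
      ∀ y ∈ Metric.ball (0 : EuclideanSpace ℝ (Fin N)) 1, (1 - ‖y‖ ^ 2) ^ c ≤ 1 := by
    intro c hc y hy
    exact Real.rpow_le_one (hballpos y hy).le (by nlinarith [sq_nonneg ‖y‖]) hc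
  have hh2int : IntegrableOn h2 (Metric.ball (0 : EuclideanSpace ℝ (Fin N)) 1) volume := by
    refine Integrable.mono hgint hh2meas.aestronglyMeasurable ?_
    filter_upwards [ae_restrict_mem measurableSet_ball] with y hy
    simp only [hh2def]
    rw [Real.norm_eq_abs, Real.norm_eq_abs, abs_of_nonneg
      (mul_nonneg (sq_nonneg _) (Real.rpow_nonneg (hballpos y hy).le _)),
      abs_of_nonneg (sq_nonneg _)]
    calc ‖gradient w y‖ ^ 2 * (1 - ‖y‖ ^ 2) ^ (α+1) ≤ ‖gradient w y‖ ^ 2 * 1 :=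
          mul_le_mul_of_nonneg_left (hrpow_le_one (α+1) (by linarith) y hy) (sq_nonneg _)
      _ = ‖gradient w y‖ ^ 2 := mul_one _
  have hh3int : IntegrableOn h3 (Metric.ball (0 : EuclideanSpace ℝ (Fin N)) 1) volume := by
    refine Integrable.mono hw2int hh3meas.aestronglyMeasurable ?_
    filter_upwards [ae_restrict_mem measurableSet_ball] with y hy
    simp only [hh3def]
    rw [Real.norm_eq_abs, Real.norm_eq_abs, abs_of_nonneg
      (mul_nonneg (sq_nonneg _) (Real.rpow_nonneg (hballpos y hy).le _)),
      abs_of_nonneg (sq_nonneg _)]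
    calc w y ^ 2 * (1 - ‖y‖ ^ 2) ^ α ≤ w y ^ 2 * 1 :=
          mul_le_mul_of_nonneg_left (hrpow_le_one α hα0.le y hy) (sq_nonneg _)
      _ = w y ^ 2 := mul_one _
  have hh2Ipos : 0 ≤ ∫ y in Metric.ball (0 : EuclideanSpace ℝ (Fin N)) 1, h2 y :=
    setIntegral_nonneg measurableSet_ball fun y hy => by
      simp only [hh2def]; have := hballpos y hy; positivity
  have hh3Ipos : 0 ≤ ∫ y in Metric.ball (0 : EuclideanSpace ℝ (Fin N)) 1, h3 y :=
    setIntegral_nonneg measurableSet_ball fun y hy => by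
      simp only [hh3def]; have := hballpos y hy; positivity
  -- the lintegrals
  set A' := ∫⁻ y in Metric.ball (0 : EuclideanSpace ℝ (Fin N)) 1, ENNReal.ofReal (h1 y) with hA'def
  set W' := ∫⁻ y in Metric.ball (0 : EuclideanSpace ℝ (Fin N)) 1, ENNReal.ofReal (h3 y) with hW'def
  set G' := ∫⁻ y in Metric.ball (0 : EuclideanSpace ℝ (Fin N)) 1, ENNReal.ofReal (h2 y) with hG'def
  have hW'eq : W' = ENNReal.ofReal (∫ y in Metric.ball (0 : EuclideanSpace ℝ (Fin N)) 1, h3 y) :=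
    (ofReal_integral_eq_lintegral_ofReal hh3int hh3nn).symm
  have hG'eq : G' = ENNReal.ofReal (∫ y in Metric.ball (0 : EuclideanSpace ℝ (Fin N)) 1, h2 y) :=
    (ofReal_integral_eq_lintegral_ofReal hh2int hh2nn).symm
  -- polar coordinate identities
  have hpolar : ∀ (h : EuclideanSpace ℝ (Fin N) → ℝ), Measurable h →
      (∫⁻ y in Metric.ball (0 : EuclideanSpace ℝ (Fin N)) 1, ENNReal.ofReal (h y))
      = ∫⁻ θ : Metric.sphere (0 : EuclideanSpace ℝ (Fin N)) 1,
          ∫⁻ r in Set.Ioo (0:ℝ) 1,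
            ENNReal.ofReal (r ^ (N-1)) * ENNReal.ofReal (h (r • (θ : EuclideanSpace ℝ (Fin N))))
            ∂volume ∂((volume : Measure (EuclideanSpace ℝ (Fin N))).toSphere) := by
    intro h hh
    rw [← lintegral_indicator measurableSet_ball]
    rw [polar_lintegral hN1 _ ((hh.ennreal_ofReal).indicator measurableSet_ball)]
    refine lintegral_congr fun θ => ?_
    have hθ1 : ‖(θ : EuclideanSpace ℝ (Fin N))‖ = 1 := mem_sphere_zero_iff_norm.1 θ.2
    have hcongr : ∀ r ∈ Set.Ioi (0:ℝ),
        ENNReal.ofReal (r ^ (N-1)) *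
          (Metric.ball (0 : EuclideanSpace ℝ (Fin N)) 1).indicator
            (fun y => ENNReal.ofReal (h y)) (r • (θ : EuclideanSpace ℝ (Fin N)))
        = (Set.Iio (1:ℝ)).indicator
            (fun r => ENNReal.ofReal (r ^ (N-1)) *
              ENNReal.ofReal (h (r • (θ : EuclideanSpace ℝ (Fin N))))) r := by
      intro r hr
      have hnorm : ‖r • (θ : EuclideanSpace ℝ (Fin N))‖ = r := by
        rw [norm_smul, hθ1, mul_one, Real.norm_eq_abs, abs_of_pos hr]
      by_cases hr1 : r < 1
      · rw [Set.indicator_of_mem (by rw [mem_ball_zero_iff, hnorm]; exact hr1),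
          Set.indicator_of_mem (by exact hr1 : r ∈ Set.Iio (1:ℝ))]
      · rw [Set.indicator_of_notMem (by rw [mem_ball_zero_iff, hnorm]; exact hr1),
          Set.indicator_of_notMem (by exact hr1 : r ∉ Set.Iio (1:ℝ)), mul_zero]
    rw [setLIntegral_congr_fun measurableSet_Ioi hcongr,
      lintegral_indicator measurableSet_Iio, Measure.restrict_restrict measurableSet_Iio,
      Set.Iio_inter_Ioi]
  have hApolar := hpolar h1 hh1meas
  have hWpolar := hpolar h3 hh3meas
  have hGpolar := hpolar h2 hh2meas
  -- identify the ray integrands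
  have hrayA : ∀ θ : Metric.sphere (0 : EuclideanSpace ℝ (Fin N)) 1,
      (∫⁻ r in Set.Ioo (0:ℝ) 1,
        ENNReal.ofReal (r ^ (N-1)) * ENNReal.ofReal (h1 (r • (θ : EuclideanSpace ℝ (Fin N))))
          ∂volume)
      = ∫⁻ r in Set.Ioo (0:ℝ) 1, ENNReal.ofReal
          (w (r • (θ : EuclideanSpace ℝ (Fin N))) ^ 2 * (r ^ (N+1) * (1 - r^2) ^ (α-1)))
          ∂volume := by
    intro θ
    have hθ1 : ‖(θ : EuclideanSpace ℝ (Fin N))‖ = 1 := mem_sphere_zero_iff_norm.1 θ.2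
    refine setLIntegral_congr_fun measurableSet_Ioo (fun r hr => ?_)
    have hnorm : ‖r • (θ : EuclideanSpace ℝ (Fin N))‖ = r := by
      rw [norm_smul, hθ1, mul_one, Real.norm_eq_abs, abs_of_pos hr.1]
    rw [← ENNReal.ofReal_mul (pow_nonneg hr.1.le _ : (0:ℝ) ≤ r ^ (N-1))]
    congr 1
    simp only [hh1def]
    rw [hnorm]
    have hrpow : r ^ (N-1) * r^2 = r ^ (N+1) := by
      rw [← pow_add]
      congr 1
      omega
    rw [← hrpow]
    ring
  have hrayW : ∀ θ : Metric.sphere (0 : EuclideanSpace ℝ (Fin N)) 1,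
      (∫⁻ r in Set.Ioo (0:ℝ) 1,
        ENNReal.ofReal (r ^ (N-1)) * ENNReal.ofReal (h3 (r • (θ : EuclideanSpace ℝ (Fin N))))
          ∂volume)
      = ∫⁻ r in Set.Ioo (0:ℝ) 1, ENNReal.ofReal
          (w (r • (θ : EuclideanSpace ℝ (Fin N))) ^ 2 * (r ^ (N-1) * (1 - r^2) ^ α))
          ∂volume := by
    intro θ
    have hθ1 : ‖(θ : EuclideanSpace ℝ (Fin N))‖ = 1 := mem_sphere_zero_iff_norm.1 θ.2
    refine setLIntegral_congr_fun measurableSet_Ioo (fun r hr => ?_)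
    have hnorm : ‖r • (θ : EuclideanSpace ℝ (Fin N))‖ = r := by
      rw [norm_smul, hθ1, mul_one, Real.norm_eq_abs, abs_of_pos hr.1]
    rw [← ENNReal.ofReal_mul (pow_nonneg hr.1.le _ : (0:ℝ) ≤ r ^ (N-1))]
    congr 1
    simp only [hh3def]
    rw [hnorm]
    ring
  have hrayG : ∀ θ : Metric.sphere (0 : EuclideanSpace ℝ (Fin N)) 1,
      (∫⁻ r in Set.Ioo (0:ℝ) 1,
        ENNReal.ofReal (r ^ (N-1)) * ENNReal.ofReal (h2 (r • (θ : EuclideanSpace ℝ (Fin N))))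
          ∂volume)
      = ∫⁻ r in Set.Ioo (0:ℝ) 1, ENNReal.ofReal
          (‖gradient w (r • (θ : EuclideanSpace ℝ (Fin N)))‖ ^ 2 * (r ^ (N-1) * (1 - r^2) ^ (α+1)))
          ∂volume := by
    intro θ
    have hθ1 : ‖(θ : EuclideanSpace ℝ (Fin N))‖ = 1 := mem_sphere_zero_iff_norm.1 θ.2
    refine setLIntegral_congr_fun measurableSet_Ioo (fun r hr => ?_)
    have hnorm : ‖r • (θ : EuclideanSpace ℝ (Fin N))‖ = r := by
      rw [norm_smul, hθ1, mul_one, Real.norm_eq_abs, abs_of_pos hr.1]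
    rw [← ENNReal.ofReal_mul (pow_nonneg hr.1.le _ : (0:ℝ) ≤ r ^ (N-1))]
    congr 1
    simp only [hh2def]
    rw [hnorm]
    ring
  -- measurability of the sphere integrands
  have hsmmeas : Measurable fun q : Metric.sphere (0 : EuclideanSpace ℝ (Fin N)) 1 × ℝ =>
      q.2 • (q.1 : EuclideanSpace ℝ (Fin N)) :=
    measurable_snd.smul (measurable_subtype_coe.comp measurable_fst)
  have hWθmeas : Measurable fun θ : Metric.sphere (0 : EuclideanSpace ℝ (Fin N)) 1 =>
      ∫⁻ r in Set.Ioo (0:ℝ) 1, ENNReal.ofReal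
        (w (r • (θ : EuclideanSpace ℝ (Fin N))) ^ 2 * (r ^ (N-1) * (1 - r^2) ^ α)) ∂volume := by
    apply Measurable.lintegral_prod_right'
      (f := fun q : Metric.sphere (0 : EuclideanSpace ℝ (Fin N)) 1 × ℝ =>
        ENNReal.ofReal (w (q.2 • (q.1 : EuclideanSpace ℝ (Fin N))) ^ 2
          * (q.2 ^ (N-1) * (1 - q.2^2) ^ α)))
    apply Measurable.ennreal_ofReal
    exact (((hw.continuous.measurable.comp hsmmeas).pow_const 2)).mul
      (((measurable_snd.pow_const (N-1))).mul
        ((measurable_rpow_const' α).comp (measurable_const.sub (measurable_snd.pow_const 2))))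
  have hGθmeas : Measurable fun θ : Metric.sphere (0 : EuclideanSpace ℝ (Fin N)) 1 =>
      ∫⁻ r in Set.Ioo (0:ℝ) 1, ENNReal.ofReal
        (‖gradient w (r • (θ : EuclideanSpace ℝ (Fin N)))‖ ^ 2
          * (r ^ (N-1) * (1 - r^2) ^ (α+1))) ∂volume := by
    apply Measurable.lintegral_prod_right'
      (f := fun q : Metric.sphere (0 : EuclideanSpace ℝ (Fin N)) 1 × ℝ =>
        ENNReal.ofReal (‖gradient w (q.2 • (q.1 : EuclideanSpace ℝ (Fin N)))‖ ^ 2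
          * (q.2 ^ (N-1) * (1 - q.2^2) ^ (α+1))))
    apply Measurable.ennreal_ofReal
    exact ((((hgradmeas.comp hsmmeas).norm).pow_const 2)).mul
      (((measurable_snd.pow_const (N-1))).mul
        ((measurable_rpow_const' (α+1)).comp (measurable_const.sub (measurable_snd.pow_const 2))))
  -- key inequality in ℝ≥0∞
  have hkey : A' ≤ ENNReal.ofReal ((N:ℝ)/α) * W' + ENNReal.ofReal (1/α^2) * G' := by
    rw [hA'def, hW'def, hG'def, hApolar, hWpolar, hGpolar]
    calc ∫⁻ θ : Metric.sphere (0 : EuclideanSpace ℝ (Fin N)) 1,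
          ∫⁻ r in Set.Ioo (0:ℝ) 1,
            ENNReal.ofReal (r ^ (N-1)) * ENNReal.ofReal (h1 (r • (θ : EuclideanSpace ℝ (Fin N))))
            ∂volume ∂((volume : Measure (EuclideanSpace ℝ (Fin N))).toSphere)
        ≤ ∫⁻ θ : Metric.sphere (0 : EuclideanSpace ℝ (Fin N)) 1,
            (ENNReal.ofReal ((N:ℝ)/α) *
              (∫⁻ r in Set.Ioo (0:ℝ) 1, ENNReal.ofReal
                (w (r • (θ : EuclideanSpace ℝ (Fin N))) ^ 2 * (r ^ (N-1) * (1 - r^2) ^ α))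
                ∂volume)
            + ENNReal.ofReal (1/α^2) *
              ∫⁻ r in Set.Ioo (0:ℝ) 1, ENNReal.ofReal
                (‖gradient w (r • (θ : EuclideanSpace ℝ (Fin N)))‖ ^ 2
                  * (r ^ (N-1) * (1 - r^2) ^ (α+1))) ∂volume)
            ∂((volume : Measure (EuclideanSpace ℝ (Fin N))).toSphere) := by
          refine lintegral_mono fun θ => ?_
          rw [hrayA θ]
          exact ray_estimate hN1 hα0 w hw (θ : EuclideanSpace ℝ (Fin N))
            (mem_sphere_zero_iff_norm.1 θ.2)
      _ = ENNReal.ofReal ((N:ℝ)/α) *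
            (∫⁻ θ : Metric.sphere (0 : EuclideanSpace ℝ (Fin N)) 1,
              ∫⁻ r in Set.Ioo (0:ℝ) 1, ENNReal.ofReal
                (w (r • (θ : EuclideanSpace ℝ (Fin N))) ^ 2 * (r ^ (N-1) * (1 - r^2) ^ α))
                ∂volume ∂((volume : Measure (EuclideanSpace ℝ (Fin N))).toSphere))
          + ENNReal.ofReal (1/α^2) *
            ∫⁻ θ : Metric.sphere (0 : EuclideanSpace ℝ (Fin N)) 1,
              ∫⁻ r in Set.Ioo (0:ℝ) 1, ENNReal.ofReal
                (‖gradient w (r • (θ : EuclideanSpace ℝ (Fin N)))‖ ^ 2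
                  * (r ^ (N-1) * (1 - r^2) ^ (α+1)))
                ∂volume ∂((volume : Measure (EuclideanSpace ℝ (Fin N))).toSphere) := by
          rw [lintegral_add_left (hWθmeas.const_mul _), lintegral_const_mul _ hWθmeas,
            lintegral_const_mul _ hGθmeas]
      _ = ENNReal.ofReal ((N:ℝ)/α) *
            (∫⁻ θ : Metric.sphere (0 : EuclideanSpace ℝ (Fin N)) 1,
              ∫⁻ r in Set.Ioo (0:ℝ) 1,
                ENNReal.ofReal (r ^ (N-1)) *
                  ENNReal.ofReal (h3 (r • (θ : EuclideanSpace ℝ (Fin N))))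
                ∂volume ∂((volume : Measure (EuclideanSpace ℝ (Fin N))).toSphere))
          + ENNReal.ofReal (1/α^2) *
            ∫⁻ θ : Metric.sphere (0 : EuclideanSpace ℝ (Fin N)) 1,
              ∫⁻ r in Set.Ioo (0:ℝ) 1,
                ENNReal.ofReal (r ^ (N-1)) *
                  ENNReal.ofReal (h2 (r • (θ : EuclideanSpace ℝ (Fin N))))
                ∂volume ∂((volume : Measure (EuclideanSpace ℝ (Fin N))).toSphere) := by
          rw [lintegral_congr fun θ => hrayW θ, lintegral_congr fun θ => hrayG θ]
  -- convert back to real integrals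
  have hfin : ENNReal.ofReal ((N:ℝ)/α) * W' + ENNReal.ofReal (1/α^2) * G' ≠ ⊤ := by
    rw [hW'eq, hG'eq]
    exact ENNReal.add_ne_top.2
      ⟨ENNReal.mul_ne_top ENNReal.ofReal_ne_top ENNReal.ofReal_ne_top,
        ENNReal.mul_ne_top ENNReal.ofReal_ne_top ENNReal.ofReal_ne_top⟩
  have hLHS : ∫ y in Metric.ball (0 : EuclideanSpace ℝ (Fin N)) 1, h1 y = A'.toReal := by
    rw [hA'def, integral_eq_lintegral_of_nonneg_ae hh1nn hh1meas.aestronglyMeasurable]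
  have hRHS : (ENNReal.ofReal ((N:ℝ)/α) * W' + ENNReal.ofReal (1/α^2) * G').toReal
      = (N:ℝ)/α * (∫ y in Metric.ball (0 : EuclideanSpace ℝ (Fin N)) 1, h3 y)
        + 1/α^2 * ∫ y in Metric.ball (0 : EuclideanSpace ℝ (Fin N)) 1, h2 y := by
    rw [hW'eq, hG'eq, ← ENNReal.ofReal_mul (by positivity), ← ENNReal.ofReal_mul (by positivity),
      ← ENNReal.ofReal_add (mul_nonneg (by positivity) hh3Ipos)
        (mul_nonneg (by positivity) hh2Ipos),
      ENNReal.toReal_ofReal (by positivity)]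
  have hmain : ∫ y in Metric.ball (0 : EuclideanSpace ℝ (Fin N)) 1, h1 y
      ≤ (N:ℝ)/α * (∫ y in Metric.ball (0 : EuclideanSpace ℝ (Fin N)) 1, h3 y)
        + 1/α^2 * ∫ y in Metric.ball (0 : EuclideanSpace ℝ (Fin N)) 1, h2 y := by
    rw [hLHS, ← hRHS]
    exact ENNReal.toReal_mono hfin hkey
  have hC2 : (N:ℝ)/α ≤ (N:ℝ)/α + 1/α^2 := le_add_of_nonneg_right (by positivity)
  have hC3 : 1/α^2 ≤ (N:ℝ)/α + 1/α^2 := le_add_of_nonneg_left (by positivity)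
  have hfin3 := mul_le_mul_of_nonneg_right hC2 hh3Ipos
  have hfin2 := mul_le_mul_of_nonneg_right hC3 hh2Ipos
  linarith
end
end
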